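/- For strings P and T, every i ∈ ℤ, and every positive integer ρ: [T ⊗ P](i) = [Σ_{c ∈ Σ} Δ_ρ[T_c] ∗ Δ_ρ[P^R_c]](i) - [T ⊗ P](i - 2ρ) + 2·[T ⊗ P](i - ρ). -/

import Mathlib

open Function

/-- Hamming distance between (prefixes of) lists: number of aligned mismatches. -/
def hamL {α : Type*} [DecidableEq α] (A B : List α) : ℕ :=
  ((List.range A.length).filter (fun i => A[i]? ≠ B[i]?)).length

/-- Substring T[a .. b] (inclusive) with integer indices. -/
def substr {α : Type*} (T : List α) (a b : ℤ) : List α :=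
  (T.drop a.toNat).take (b - a + 1).toNat

/-- Characteristic function of a string and a character. -/
def charFn {α : Type*} [DecidableEq α] (X : List α) (c : α) : ℤ → ℤ :=
  fun i => if 0 ≤ i ∧ X[i.toNat]? = some c then 1 else 0

/-- Convolution of two (finitely supported) functions ℤ → ℤ. -/
noncomputable def conv (f g : ℤ → ℤ) : ℤ → ℤ := fun i => ∑ᶠ j : ℤ, f j * g (i - j)

/-- Cross-correlation of two strings. -/
noncomputable def cross {α : Type*} [Fintype α] [DecidableEq α] (X Y : List α) : ℤ → ℤ :=
  fun i => ∑ c : α, conv (charFn X c) (charFn Y.reverse c) i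

/-- Backward difference of `f` due to `ρ`. -/
def bdiff (ρ : ℤ) (f : ℤ → ℤ) : ℤ → ℤ := fun i => f i - f (i - ρ)

/-- `ρ` is a `d`-period of `X`: HAM(X[0..n-ρ-1], X[ρ..n-1]) ≤ d. -/
def isPeriodL {α : Type*} [DecidableEq α] (X : List α) (ρ d : ℕ) : Prop :=
  hamL (X.take (X.length - ρ)) (X.drop ρ) ≤ d

lemma charFn_support {α : Type*} [DecidableEq α] (X : List α) (c : α) :
    (support (charFn X c)).Finite := by
  apply Set.Finite.subset (Set.finite_Icc (0 : ℤ) X.length)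
  intro j hj
  simp only [mem_support, charFn] at hj
  by_cases h : 0 ≤ j ∧ X[j.toNat]? = some c
  · obtain ⟨h0, h1⟩ := h
    have : j.toNat < X.length := by
      by_contra hc
      rw [List.getElem?_eq_none (by omega)] at h1
      exact nomatch h1
    exact Set.mem_Icc.2 ⟨h0, by omega⟩
  · simp [h] at hj

lemma mul_support_left {f g : ℤ → ℤ} (hf : (support f).Finite) :
    (support (fun j => f j * g j)).Finite := by
  apply hf.subset
  intro j hj
  simp only [mem_support] at hj ⊢
  intro h; apply hj; rw [h, zero_mul]

lemma shift_support {f : ℤ → ℤ} (hf : (support f).Finite) (ρ : ℤ) :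
    (support (fun j => f (j - ρ))).Finite := by
  have : support (fun j => f (j - ρ)) = (· + ρ) '' support f := by
    ext j
    simp only [mem_support, Set.mem_image]
    constructor
    · intro h; exact ⟨j - ρ, h, by ring⟩
    · rintro ⟨x, hx, rfl⟩; simpa using hx
  rw [this]; exact hf.image _

lemma conv_shift_right (f g : ℤ → ℤ) (ρ i : ℤ) :
    (∑ᶠ j : ℤ, f j * g (i - j - ρ)) = conv f g (i - ρ) := by
  unfold conv
  apply finsum_congr
  intro j
  ring_nf

lemma conv_shift_left (f g : ℤ → ℤ) (ρ i : ℤ) :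
    (∑ᶠ j : ℤ, f (j - ρ) * g (i - j)) = conv f g (i - ρ) := by
  unfold conv
  rw [← finsum_comp (g := fun j => f j * g (i - ρ - j)) (fun j : ℤ => j - ρ)
    ⟨fun a b h => by simp only at h; omega, fun b => ⟨b + ρ, by simp⟩⟩]
  apply finsum_congr
  intro j
  ring_nf

lemma conv_shift_both (f g : ℤ → ℤ) (ρ i : ℤ) :
    (∑ᶠ j : ℤ, f (j - ρ) * g (i - j - ρ)) = conv f g (i - 2 * ρ) := by
  unfold conv
  rw [← finsum_comp (g := fun j => f j * g (i - 2 * ρ - j)) (fun j : ℤ => j - ρ)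
    ⟨fun a b h => by simp only at h; omega, fun b => ⟨b + ρ, by simp⟩⟩]
  apply finsum_congr
  intro j
  ring_nf

lemma conv_bdiff (f g : ℤ → ℤ) (hf : (support f).Finite) (hg : (support g).Finite) (ρ i : ℤ) :
    conv (bdiff ρ f) (bdiff ρ g) i
      = conv f g i - 2 * conv f g (i - ρ) + conv f g (i - 2 * ρ) := by
  have hfs := shift_support hf ρ
  have key : conv (bdiff ρ f) (bdiff ρ g) i
      = (∑ᶠ j : ℤ, (f j * g (i - j) - f j * g (i - j - ρ)))
        - (∑ᶠ j : ℤ, (f (j - ρ) * g (i - j) - f (j - ρ) * g (i - j - ρ))) := by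
    unfold conv bdiff
    rw [← finsum_sub_distrib]
    · apply finsum_congr; intro j; ring
    · apply hf.subset
      intro j hj
      simp only [mem_support] at hj ⊢
      intro h; apply hj; simp [h]
    · apply hfs.subset
      intro j hj
      simp only [mem_support] at hj ⊢
      intro h; apply hj; simp [h]
  rw [key, finsum_sub_distrib (mul_support_left hf) (mul_support_left hf),
    finsum_sub_distrib (mul_support_left hfs) (mul_support_left hfs),
    conv_shift_right, conv_shift_left, conv_shift_both]
  unfold conv
  ring

theorem stmt3 {α : Type*} [Fintype α] [DecidableEq α]
    (P T : List α) (i : ℤ) (ρ : ℤ) (hρ : 0 < ρ) :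
    cross T P i
      = (∑ c : α, conv (bdiff ρ (charFn T c)) (bdiff ρ (charFn P.reverse c)) i)
          - cross T P (i - 2 * ρ) + 2 * cross T P (i - ρ) := by
  have : ∀ c : α, conv (bdiff ρ (charFn T c)) (bdiff ρ (charFn P.reverse c)) i
      = conv (charFn T c) (charFn P.reverse c) i
        - 2 * conv (charFn T c) (charFn P.reverse c) (i - ρ)
        + conv (charFn T c) (charFn P.reverse c) (i - 2 * ρ) :=
    fun c => conv_bdiff _ _ (charFn_support T c) (charFn_support P.reverse c) ρ i
  simp only [cross, this, Finset.sum_add_distrib, Finset.sum_sub_distrib, Finset.mul_sum]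
  ring
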